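/- arXiv:math/9904061 — 2 statements merged into one kernel-verified Lean document; each statement's English description precedes it below -/
import Mathlib

section
/- Coefficient identity via Saalschütz: Let a, b be complex numbers and N a nonnegative integer such that no factor in any denominator below vanishes (in particular 1 + a − b is not a nonpositive integer, and (1/2 − a/2 − N)_N ≠ 0). Then ∑_{k=0}^{N} (a/2)_k (1/2 + a/2 − b)_k (−4)^k (a + 2k)_{N−k} / ((1+a−b)_k (N−k)! k!) = (a)_N (1/2 + a/2)_N (1 − b − N)_N / (N! (1+a−b)_N (1/2 − a/2 − N)_N). -/
set_option maxHeartbeats 800000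

open Complex Finset Filter Topology

/-- The Pochhammer symbol `(x)_k = x (x+1) ⋯ (x+k-1)`. -/
noncomputable def poch (x : ℂ) (k : ℕ) : ℂ := (ascPochhammer ℂ k).eval x

open Finset

lemma poch_succ (x : ℂ) (n : ℕ) : poch x (n + 1) = poch x n * (x + n) := by
  simp [poch, ascPochhammer_succ_eval]
lemma poch_succ_left (x : ℂ) (n : ℕ) : poch x (n + 1) = x * poch (x + 1) n := by
  induction n with
  | zero => simp [poch, ascPochhammer_one]
  | succ n ih => rw [poch_succ, ih, poch_succ]; push_cast; ring
lemma poch_syz (x : ℂ) (n : ℕ) : x * poch (x + 1) n = poch x n * (x + n) := by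
  rw [← poch_succ_left, poch_succ]

noncomputable def Tm (a b : ℂ) (N k : ℕ) : ℂ :=
  poch (a / 2) k * poch (1 / 2 + a / 2 - b) k * (-4 : ℂ) ^ k * poch (a + 2 * k) (N - k) *
    poch (1 + a - b + k) (N - k) / ((Nat.factorial (N - k) : ℂ) * (Nat.factorial k : ℂ))

noncomputable def Gm (a b : ℂ) (N k : ℕ) : ℂ :=
  -(k : ℂ) * poch (a / 2) k * poch (1 / 2 + a / 2 - b) k * (-4 : ℂ) ^ k *
      poch (a + 2 * k - 1) (N + 1 - k) * poch (a - b + k) (N + 1 - k) /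
    (((N : ℂ) + 1) * (Nat.factorial (N + 1 - k) : ℂ) * (Nat.factorial k : ℂ))


lemma step_scalar (a b A C E P0 X Q0 K Mm F1 F2 : ℂ)
    (syz : (a + 2 * K) * X = P0 * (a + 2 * K + Mm))
    (hF1 : F1 ≠ 0) (hF2 : F2 ≠ 0) (h1 : K + Mm + 1 ≠ 0) (h2 : Mm + 1 ≠ 0) (h3 : K + 1 ≠ 0) :
    A * C * E * (P0 * (a + 2 * K + Mm)) * (Q0 * (1 + a - b + K + Mm)) / ((Mm + 1) * F1 * F2)
    = (a + (K + Mm)) * (b + (K + Mm)) / (K + Mm + 1) * (A * C * E * P0 * Q0 / (F1 * F2))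
      + -(K + 1) * (A * (a / 2 + K)) * (C * (1 / 2 + a / 2 - b + K)) * (E * -4) * X * Q0 /
          ((K + Mm + 1) * F1 * ((K + 1) * F2))
      - -K * A * C * E * ((a + 2 * K - 1) * P0) * ((a - b + K) * Q0) /
          ((K + Mm + 1) * ((Mm + 1) * F1) * F2) := by
  have t3num : -(K + 1) * (A * (a / 2 + K)) * (C * (1 / 2 + a / 2 - b + K)) * (E * -4) * X * Q0
      = (K + 1) * (1 + a + 2 * K - 2 * b) * A * C * E * Q0 * ((a + 2 * K) * X) := by ring
  rw [t3num, syz]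
  have hD : (K + Mm + 1) * ((Mm + 1) * ((K + 1) * (F1 * F2))) ≠ 0 :=
    mul_ne_zero h1 (mul_ne_zero h2 (mul_ne_zero h3 (mul_ne_zero hF1 hF2)))
  have hd1 : (Mm + 1) * F1 * F2 ≠ 0 := mul_ne_zero (mul_ne_zero h2 hF1) hF2
  have hd2 : (K + Mm + 1) * (F1 * F2) ≠ 0 := mul_ne_zero h1 (mul_ne_zero hF1 hF2)
  have hd3 : (K + Mm + 1) * F1 * ((K + 1) * F2) ≠ 0 :=
    mul_ne_zero (mul_ne_zero h1 hF1) (mul_ne_zero h3 hF2)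
  have hd4 : (K + Mm + 1) * ((Mm + 1) * F1) * F2 ≠ 0 :=
    mul_ne_zero (mul_ne_zero h1 (mul_ne_zero h2 hF1)) hF2
  have t1 : A * C * E * (P0 * (a + 2 * K + Mm)) * (Q0 * (1 + a - b + K + Mm)) / ((Mm + 1) * F1 * F2)
      = ((K + Mm + 1) * (K + 1) * (A * C * E * (P0 * (a + 2 * K + Mm)) * (Q0 * (1 + a - b + K + Mm))))
        / ((K + Mm + 1) * ((Mm + 1) * ((K + 1) * (F1 * F2)))) := by
    rw [div_eq_div_iff hd1 hD]; ring
  have t2 : (a + (K + Mm)) * (b + (K + Mm)) / (K + Mm + 1) * (A * C * E * P0 * Q0 / (F1 * F2))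
      = ((Mm + 1) * (K + 1) * ((a + (K + Mm)) * (b + (K + Mm)) * (A * C * E * P0 * Q0)))
        / ((K + Mm + 1) * ((Mm + 1) * ((K + 1) * (F1 * F2)))) := by
    rw [div_mul_div_comm, div_eq_div_iff hd2 hD]; ring
  have t3 : (K + 1) * (1 + a + 2 * K - 2 * b) * A * C * E * Q0 * (P0 * (a + 2 * K + Mm)) /
        ((K + Mm + 1) * F1 * ((K + 1) * F2))
      = ((Mm + 1) * ((K + 1) * (1 + a + 2 * K - 2 * b) * A * C * E * Q0 * (P0 * (a + 2 * K + Mm))))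
        / ((K + Mm + 1) * ((Mm + 1) * ((K + 1) * (F1 * F2)))) := by
    rw [div_eq_div_iff hd3 hD]; ring
  have t4 : -K * A * C * E * ((a + 2 * K - 1) * P0) * ((a - b + K) * Q0) /
        ((K + Mm + 1) * ((Mm + 1) * F1) * F2)
      = ((K + 1) * (-K * A * C * E * ((a + 2 * K - 1) * P0) * ((a - b + K) * Q0)))
        / ((K + Mm + 1) * ((Mm + 1) * ((K + 1) * (F1 * F2)))) := by
    rw [div_eq_div_iff hd4 hD]; ring
  rw [t1, t2, t3, t4, ← add_div, ← sub_div, div_eq_div_iff hD hD]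
  ring

lemma step (a b : ℂ) (k m : ℕ) :
    Tm a b (k + m + 1) k
      = (a + (k + m : ℕ)) * (b + (k + m : ℕ)) / (((k + m : ℕ) : ℂ) + 1) * Tm a b (k + m) k
        + Gm a b (k + m) (k + 1) - Gm a b (k + m) k := by
  have e1 : k + m + 1 - k = m + 1 := by omega
  have e2 : k + m - k = m := by omega
  have e3 : k + m + 1 - (k + 1) = m := by omega
  simp only [Tm, Gm, e1, e2, e3]
  rw [poch_succ (a + 2 * k) m, poch_succ (1 + a - b + k) m]
  have arg0 : a + 2 * (k : ℂ) - 1 + 1 = a + 2 * k := by ring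
  rw [poch_succ_left (a + 2 * (k : ℂ) - 1) m, arg0]
  have arg1 : a - b + (k : ℂ) + 1 = 1 + a - b + k := by ring
  rw [poch_succ_left (a - b + (k : ℂ)) m, arg1]
  have arg2 : a + 2 * ((k + 1 : ℕ) : ℂ) - 1 = a + 2 * (k : ℂ) + 1 := by push_cast; ring
  rw [arg2]
  have arg3 : a - b + ((k + 1 : ℕ) : ℂ) = 1 + a - b + (k : ℂ) := by push_cast; ring
  rw [arg3]
  rw [poch_succ (a / 2) k, poch_succ (1 / 2 + a / 2 - b) k, pow_succ (-4 : ℂ) k]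
  rw [Nat.factorial_succ m, Nat.factorial_succ k]
  push_cast
  have hm1 : ((m : ℂ) + 1) ≠ 0 := by exact_mod_cast Nat.succ_ne_zero m
  have hk1 : ((k : ℂ) + 1) ≠ 0 := by exact_mod_cast Nat.succ_ne_zero k
  have hkm1 : ((k : ℂ) + (m : ℂ) + 1) ≠ 0 := by exact_mod_cast Nat.succ_ne_zero (k + m)
  have hfm : ((Nat.factorial m : ℂ)) ≠ 0 := by exact_mod_cast Nat.factorial_ne_zero m
  have hfk : ((Nat.factorial k : ℂ)) ≠ 0 := by exact_mod_cast Nat.factorial_ne_zero k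
  exact step_scalar a b (poch (a / 2) k) (poch (1 / 2 + a / 2 - b) k) ((-4 : ℂ) ^ k)
    (poch (a + 2 * (k : ℂ)) m) (poch (a + 2 * (k : ℂ) + 1) m) (poch (1 + a - b + (k : ℂ)) m)
    (k : ℂ) (m : ℂ) (Nat.factorial m : ℂ) (Nat.factorial k : ℂ)
    (poch_syz (a + 2 * (k : ℂ)) m) hfm hfk hkm1 hm1 hk1
lemma poch_zero' (x : ℂ) : poch x 0 = 1 := by simp [poch]

lemma poch_add (x : ℂ) (m n : ℕ) : poch x (m + n) = poch x m * poch (x + m) n := by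
  induction n with
  | zero => simp [poch_zero']
  | succ n ih =>
      have e : m + (n + 1) = (m + n) + 1 := by omega
      rw [e, poch_succ, ih, poch_succ]
      push_cast
      ring

lemma poch_ne_zero (x : ℂ) (h : ∀ j : ℕ, x + j ≠ 0) (n : ℕ) : poch x n ≠ 0 := by
  induction n with
  | zero => simp [poch_zero']
  | succ n ih => rw [poch_succ]; exact mul_ne_zero ih (h n)

lemma poch_reflect (x : ℂ) (n : ℕ) : poch x n = (-1) ^ n * poch (1 - x - n) n := by
  induction n with
  | zero => simp [poch_zero']
  | succ n ih =>
      rw [poch_succ, ih, poch_succ_left]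
      have h1 : (1 : ℂ) - x - (n + 1 : ℕ) + 1 = 1 - x - n := by push_cast; ring
      rw [h1]
      push_cast
      ring

lemma Gm_zero (a b : ℂ) (N : ℕ) : Gm a b N 0 = 0 := by simp [Gm]

lemma Gm_last (a b : ℂ) (N : ℕ) : Gm a b N (N + 1) = - Tm a b (N + 1) (N + 1) := by
  have e : N + 1 - (N + 1) = 0 := Nat.sub_self _
  simp only [Gm, Tm, e, poch_zero', Nat.factorial_zero]
  have h1 : ((N : ℂ) + 1) ≠ 0 := by exact_mod_cast Nat.succ_ne_zero N
  have h2 : ((Nat.factorial (N + 1) : ℂ)) ≠ 0 := by exact_mod_cast Nat.factorial_ne_zero (N + 1)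
  push_cast
  field_simp

lemma main_sum (a b : ℂ) (N : ℕ) :
    ∑ k ∈ range (N + 1), Tm a b N k = poch a N * poch b N / (Nat.factorial N : ℂ) := by
  induction N with
  | zero => simp [Tm, poch_zero']
  | succ N ih =>
      have key : ∀ x ∈ range (N + 1), Tm a b (N + 1) x
          = ((a + ((N : ℕ) : ℂ)) * (b + ((N : ℕ) : ℂ)) / (((N : ℕ) : ℂ) + 1)) * Tm a b N x
            + (Gm a b N (x + 1) - Gm a b N x) := by
        intro x hx
        have hxN : x ≤ N := Nat.lt_succ_iff.mp (mem_range.mp hx)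
        obtain ⟨m, rfl⟩ := Nat.exists_eq_add_of_le hxN
        rw [step a b x m]
        ring
      rw [Finset.sum_range_succ, Finset.sum_congr rfl key, Finset.sum_add_distrib,
        ← Finset.mul_sum, ih, Finset.sum_range_sub (Gm a b N), Gm_zero, Gm_last]
      rw [poch_succ a N, poch_succ b N, Nat.factorial_succ N]
      have h1 : ((N : ℂ) + 1) ≠ 0 := by exact_mod_cast Nat.succ_ne_zero N
      have h2 : ((Nat.factorial N : ℂ)) ≠ 0 := by exact_mod_cast Nat.factorial_ne_zero N
      push_cast
      field_simp
      ring

/-- Coefficient identity via Saalschütz: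
`∑_{k=0}^N (a/2)_k (1/2+a/2-b)_k (-4)^k (a+2k)_{N-k} / ((1+a-b)_k (N-k)! k!)
  = (a)_N (1/2+a/2)_N (1-b-N)_N / (N! (1+a-b)_N (1/2-a/2-N)_N)`. -/
theorem coefficient_identity_saalschutz (a b : ℂ) (N : ℕ)
    (h1 : ∀ m : ℕ, 1 + a - b ≠ -(m : ℂ))
    (h2 : poch (1 / 2 - a / 2 - N) N ≠ 0) :
    ∑ k ∈ range (N + 1),
        poch (a / 2) k * poch (1 / 2 + a / 2 - b) k * (-4 : ℂ) ^ k *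
          poch (a + 2 * k) (N - k) /
        (poch (1 + a - b) k * (Nat.factorial (N - k) : ℂ) * (Nat.factorial k : ℂ))
      = poch a N * poch (1 / 2 + a / 2) N * poch (1 - b - N) N /
        ((Nat.factorial N : ℂ) * poch (1 + a - b) N * poch (1 / 2 - a / 2 - N) N) := by
  have hd : ∀ j : ℕ, (1 + a - b) + (j : ℂ) ≠ 0 := by
    intro j hj
    exact h1 j (by linear_combination hj)
  have hpd : ∀ n : ℕ, poch (1 + a - b) n ≠ 0 := poch_ne_zero (1 + a - b) hd
  have hterm : ∀ k ∈ range (N + 1),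
      poch (a / 2) k * poch (1 / 2 + a / 2 - b) k * (-4 : ℂ) ^ k * poch (a + 2 * k) (N - k) /
        (poch (1 + a - b) k * (Nat.factorial (N - k) : ℂ) * (Nat.factorial k : ℂ))
      = Tm a b N k / poch (1 + a - b) N := by
    intro k hk
    have hkN : k ≤ N := Nat.lt_succ_iff.mp (mem_range.mp hk)
    obtain ⟨m, rfl⟩ := Nat.exists_eq_add_of_le hkN
    have e2 : k + m - k = m := by omega
    simp only [Tm, e2]
    rw [poch_add (1 + a - b) k m]
    have hQ : poch (1 + a - b + (k : ℂ)) m ≠ 0 := by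
      apply poch_ne_zero
      intro j hj
      exact hd (k + j) (by push_cast; linear_combination hj)
    have hfm : ((Nat.factorial m : ℂ)) ≠ 0 := by exact_mod_cast Nat.factorial_ne_zero m
    have hfk : ((Nat.factorial k : ℂ)) ≠ 0 := by exact_mod_cast Nat.factorial_ne_zero k
    rw [div_div]
    rw [div_eq_div_iff (mul_ne_zero (mul_ne_zero (hpd k) hfm) hfk)
      (mul_ne_zero (mul_ne_zero hfm hfk) (mul_ne_zero (hpd k) hQ))]
    ring
  rw [Finset.sum_congr rfl hterm, ← Finset.sum_div, main_sum]
  have hrb : poch b N = (-1) ^ N * poch (1 - b - N) N := poch_reflect b N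
  have hra : poch (1 / 2 + a / 2) N = (-1) ^ N * poch (1 / 2 - a / 2 - N) N := by
    have := poch_reflect (1 / 2 + a / 2) N
    rw [this]
    have e : (1 : ℂ) - (1 / 2 + a / 2) - N = 1 / 2 - a / 2 - N := by ring
    rw [e]
  have hfN : ((Nat.factorial N : ℂ)) ≠ 0 := by exact_mod_cast Nat.factorial_ne_zero N
  have hdN : poch (1 + a - b) N ≠ 0 := hpd N
  rw [hrb, hra]
  have hps : poch (1 / 2 - a / 2 - (N : ℂ)) N ≠ 0 := h2
  have hneg : ((-1 : ℂ)) ^ N ≠ 0 := pow_ne_zero N (by norm_num)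
  rw [div_div]
  rw [div_eq_div_iff (mul_ne_zero hfN hdN) (mul_ne_zero (mul_ne_zero hfN hdN) hps)]
  ring
end

section
/- Bailey's theorem: Let a, b be complex numbers with b not a nonpositive integer and such that none of b/2, (1+b)/2, (a+b)/2, (1−a+b)/2 is a nonpositive integer or zero. Then ∑_{k=0}^∞ (a)_k (1−a)_k (1/2)^k / ((b)_k k!) = Γ(b/2) Γ((1+b)/2) / (Γ((a+b)/2) Γ((1−a+b)/2)). -/
set_option maxHeartbeats 1000000

open Complex Finset Filter Topology

namespace BaileyAux

lemma poch_zero (x : ℂ) : poch x 0 = 1 := by simp [poch]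

lemma poch_succ (x : ℂ) (k : ℕ) : poch x (k + 1) = poch x k * (x + k) := by
  simp [poch, ascPochhammer_succ_right]

lemma add_nat_ne_zero {x : ℂ} (hx : ∀ m : ℕ, x ≠ -(m : ℂ)) (k : ℕ) : x + k ≠ 0 :=
  fun h => hx k (eq_neg_of_add_eq_zero_left h)

lemma hx_shift {x : ℂ} (hx : ∀ m : ℕ, x ≠ -(m : ℂ)) (j : ℕ) :
    ∀ m : ℕ, x + j ≠ -(m : ℂ) := by
  intro m h
  apply hx (m + j)
  push_cast
  linear_combination h

lemma poch_ne_zero {x : ℂ} (hx : ∀ m : ℕ, x ≠ -(m : ℂ)) (k : ℕ) : poch x k ≠ 0 := by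
  induction k with
  | zero => simp [poch_zero]
  | succ n ih =>
    rw [poch_succ]
    exact mul_ne_zero ih (add_nat_ne_zero hx n)

lemma poch_shift2 (x : ℂ) (k : ℕ) :
    poch (x + 2) k * (x * (x + 1)) = poch x k * ((x + k) * (x + k + 1)) := by
  induction k with
  | zero => simp [poch_zero]
  | succ n ih =>
    rw [poch_succ, poch_succ]
    push_cast
    linear_combination (x + n + 2) * ih

noncomputable def bterm (a x : ℂ) (k : ℕ) : ℂ :=
  poch a k * poch (1 - a) k * (1 / 2 : ℂ) ^ k / (poch x k * (Nat.factorial k : ℂ))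

noncomputable def gterm (a : ℂ) (k : ℕ) : ℂ :=
  poch a k * poch (1 - a) k * (1 / 2 : ℂ) ^ k / (Nat.factorial k : ℂ)

lemma bterm_zero (a x : ℂ) : bterm a x 0 = 1 := by
  simp [bterm, poch_zero]

lemma bterm_eq (a x : ℂ) (k : ℕ) : bterm a x k = gterm a k / poch x k := by
  rw [bterm, gterm, div_div]
  rw [mul_comm (poch x k)]

lemma factorial_ne_zero' (k : ℕ) : (Nat.factorial k : ℂ) ≠ 0 :=
  Nat.cast_ne_zero.2 (Nat.factorial_ne_zero k)

lemma bterm_succ (a : ℂ) {x : ℂ} (hx : ∀ m : ℕ, x ≠ -(m : ℂ)) (k : ℕ) :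
    bterm a x (k + 1) = bterm a x k * ((a + k) * ((1 - a) + k)) / (2 * ((x + k) * ((k : ℂ) + 1))) := by
  have h1 : poch x k ≠ 0 := poch_ne_zero hx k
  have h2 : x + k ≠ 0 := add_nat_ne_zero hx k
  have h3 : (Nat.factorial k : ℂ) ≠ 0 := factorial_ne_zero' k
  have h4 : ((k : ℂ) + 1) ≠ 0 := Nat.cast_add_one_ne_zero k
  simp only [bterm, poch_succ, Nat.factorial_succ, Nat.cast_mul, Nat.cast_add, Nat.cast_one,
    pow_succ]
  field_simp

lemma bterm_ratio (a : ℂ) {x : ℂ} (hx : ∀ m : ℕ, x ≠ -(m : ℂ)) :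
    ∀ᶠ k in atTop, ‖bterm a x (k + 1)‖ ≤ (3 / 4 : ℝ) * ‖bterm a x k‖ := by
  obtain ⟨N, hN⟩ := exists_nat_gt (10 * (‖a‖ + ‖1 - a‖ + ‖x‖) + 1)
  rw [eventually_atTop]
  refine ⟨N, fun k hk => ?_⟩
  have hkR : (10 : ℝ) * (‖a‖ + ‖1 - a‖ + ‖x‖) + 1 ≤ (k : ℝ) := by
    calc (10 : ℝ) * (‖a‖ + ‖1 - a‖ + ‖x‖) + 1 ≤ N := hN.le
    _ ≤ (k : ℝ) := Nat.cast_le.2 hk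
  have hk1 : (1 : ℝ) ≤ (k : ℝ) := by
    nlinarith [norm_nonneg a, norm_nonneg (1 - a), norm_nonneg x]
  have hnk : ‖((k : ℕ) : ℂ)‖ = (k : ℝ) := Complex.norm_natCast k
  have hna : ‖a + (k : ℂ)‖ ≤ ‖a‖ + (k : ℝ) := by
    calc ‖a + (k : ℂ)‖ ≤ ‖a‖ + ‖((k : ℕ) : ℂ)‖ := norm_add_le _ _
    _ = ‖a‖ + (k : ℝ) := by rw [hnk]
  have hna' : ‖(1 - a) + (k : ℂ)‖ ≤ ‖1 - a‖ + (k : ℝ) := by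
    calc ‖(1 - a) + (k : ℂ)‖ ≤ ‖1 - a‖ + ‖((k : ℕ) : ℂ)‖ := norm_add_le _ _
    _ = ‖1 - a‖ + (k : ℝ) := by rw [hnk]
  have hnx : (k : ℝ) - ‖x‖ ≤ ‖x + (k : ℂ)‖ := by
    have h : ‖(k : ℂ)‖ ≤ ‖x + (k : ℂ)‖ + ‖x‖ := by
      calc ‖(k : ℂ)‖ = ‖(x + (k : ℂ)) - x‖ := by ring_nf
      _ ≤ ‖x + (k : ℂ)‖ + ‖x‖ := norm_sub_le _ _
    rw [hnk] at h
    linarith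
  have hnk1 : ‖(k : ℂ) + 1‖ = (k : ℝ) + 1 := by
    have h : ((k : ℂ) + 1) = ((k + 1 : ℕ) : ℂ) := by push_cast; ring
    rw [h, Complex.norm_natCast]
    push_cast; ring
  have hn2 : ‖(2 : ℂ)‖ = 2 := by norm_num
  rw [bterm_succ a hx k, norm_div, norm_mul, norm_mul, norm_mul, norm_mul, hn2, hnk1]
  set B := ‖bterm a x k‖ with hB
  set A1 := ‖a + (k : ℂ)‖
  set A2 := ‖(1 - a) + (k : ℂ)‖
  set X := ‖x + (k : ℂ)‖
  have hBpos : (0 : ℝ) ≤ B := norm_nonneg _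
  have hA1 : A1 ≤ (11 / 10) * (k : ℝ) := by nlinarith [norm_nonneg (1 - a), norm_nonneg x]
  have hA2 : A2 ≤ (11 / 10) * (k : ℝ) := by nlinarith [norm_nonneg a, norm_nonneg x]
  have hX : (9 / 10) * (k : ℝ) ≤ X := by nlinarith [norm_nonneg a, norm_nonneg (1 - a)]
  have hXpos : (0 : ℝ) < X := by nlinarith
  have hdenpos : (0 : ℝ) < 2 * (X * ((k : ℝ) + 1)) := by nlinarith
  rw [div_le_iff₀ hdenpos]
  have h121 : A1 * A2 ≤ (121 / 100) * ((k : ℝ) * (k : ℝ)) := by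
    nlinarith [norm_nonneg (a + (k : ℂ)), norm_nonneg ((1 - a) + (k : ℂ))]
  have h95 : (9 / 5) * ((k : ℝ) * (k : ℝ)) ≤ 2 * (X * ((k : ℝ) + 1)) := by nlinarith
  nlinarith [mul_le_mul_of_nonneg_left h121 hBpos,
    mul_le_mul_of_nonneg_left h95 (by positivity : (0 : ℝ) ≤ 3 / 4 * B),
    mul_nonneg (mul_nonneg hBpos (by positivity : (0:ℝ) ≤ (k:ℝ))) (by positivity : (0:ℝ) ≤ (k:ℝ))]

lemma summable_norm_bterm (a : ℂ) {x : ℂ} (hx : ∀ m : ℕ, x ≠ -(m : ℂ)) :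
    Summable (fun k => ‖bterm a x k‖) := by
  apply summable_of_ratio_norm_eventually_le (r := 3 / 4) (by norm_num)
  filter_upwards [bterm_ratio a hx] with k hk
  simpa [Real.norm_eq_abs, _root_.abs_of_nonneg (norm_nonneg _)] using hk

lemma summable_bterm (a : ℂ) {x : ℂ} (hx : ∀ m : ℕ, x ≠ -(m : ℂ)) :
    Summable (fun k => bterm a x k) :=
  (summable_norm_bterm a hx).of_norm


lemma bterm_geom_bound (a : ℂ) {x : ℂ} (hx : ∀ m : ℕ, x ≠ -(m : ℂ)) :
    ∃ C : ℝ, 0 ≤ C ∧ ∀ᶠ k in atTop, ‖bterm a x k‖ ≤ C * (3 / 4 : ℝ) ^ k := by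
  obtain ⟨N, hN⟩ := eventually_atTop.1 (bterm_ratio a hx)
  refine ⟨‖bterm a x N‖ * (4 / 3 : ℝ) ^ N, by positivity, eventually_atTop.2 ⟨N, fun k hk => ?_⟩⟩
  have key : ∀ m : ℕ, ‖bterm a x (N + m)‖ ≤ ‖bterm a x N‖ * (3 / 4 : ℝ) ^ m := by
    intro m
    induction m with
    | zero => simp
    | succ j ih =>
      have h1 := hN (N + j) (Nat.le_add_right N j)
      calc ‖bterm a x (N + (j + 1))‖ = ‖bterm a x ((N + j) + 1)‖ := by ring_nf
      _ ≤ (3 / 4 : ℝ) * ‖bterm a x (N + j)‖ := h1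
      _ ≤ (3 / 4 : ℝ) * (‖bterm a x N‖ * (3 / 4 : ℝ) ^ j) := by
          apply mul_le_mul_of_nonneg_left ih (by norm_num)
      _ = ‖bterm a x N‖ * (3 / 4 : ℝ) ^ (j + 1) := by ring
  have hkN : k = N + (k - N) := (Nat.add_sub_cancel' hk).symm
  have h2 := key (k - N)
  rw [← hkN] at h2
  refine h2.trans (le_of_eq ?_)
  have hpow : (3 / 4 : ℝ) ^ k = (3 / 4 : ℝ) ^ (k - N) * (3 / 4 : ℝ) ^ N := by
    rw [← pow_add, Nat.sub_add_cancel hk]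
  have h34 : ((4 : ℝ) / 3) ^ N * (3 / 4 : ℝ) ^ N = 1 := by
    rw [← mul_pow]; norm_num
  calc ‖bterm a x N‖ * (3 / 4 : ℝ) ^ (k - N)
      = ‖bterm a x N‖ * (3 / 4 : ℝ) ^ (k - N) * (((4 : ℝ) / 3) ^ N * (3 / 4 : ℝ) ^ N) := by
        rw [h34, mul_one]
  _ = ‖bterm a x N‖ * (4 / 3 : ℝ) ^ N * ((3 / 4 : ℝ) ^ (k - N) * (3 / 4 : ℝ) ^ N) := by ring
  _ = ‖bterm a x N‖ * (4 / 3 : ℝ) ^ N * (3 / 4 : ℝ) ^ k := by rw [← hpow]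

lemma tendsto_poly_bterm (a c1 c2 : ℂ) {x : ℂ} (hx : ∀ m : ℕ, x ≠ -(m : ℂ)) :
    Tendsto (fun k : ℕ => (c2 * (k : ℂ) ^ 2 + c1 * (k : ℂ)) * bterm a x k) atTop (𝓝 0) := by
  obtain ⟨C, hC0, hC⟩ := bterm_geom_bound a hx
  apply squeeze_zero_norm' (a := fun k : ℕ =>
    (‖c2‖ * (k : ℝ) ^ 2 + ‖c1‖ * (k : ℝ)) * (C * (3 / 4 : ℝ) ^ k))
  · filter_upwards [hC] with k hk
    rw [norm_mul]
    apply mul_le_mul _ hk (norm_nonneg _)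
    · positivity
    · calc ‖c2 * (k : ℂ) ^ 2 + c1 * (k : ℂ)‖ ≤ ‖c2 * (k : ℂ) ^ 2‖ + ‖c1 * (k : ℂ)‖ :=
        norm_add_le _ _
      _ = ‖c2‖ * (k : ℝ) ^ 2 + ‖c1‖ * (k : ℝ) := by
          rw [norm_mul, norm_mul, norm_pow]
          rw [Complex.norm_natCast]
  · have h2 : Tendsto (fun k : ℕ => (k : ℝ) ^ 2 * (3 / 4 : ℝ) ^ k) atTop (𝓝 0) := by
      have := (summable_norm_pow_mul_geometric_of_norm_lt_one (R := ℝ) 2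
        (r := (3/4 : ℝ)) (by rw [Real.norm_eq_abs, abs_of_pos (by norm_num : (0:ℝ) < 3/4)]; norm_num)).tendsto_atTop_zero
      exact squeeze_zero_norm (fun k => le_rfl) this
    have h1 : Tendsto (fun k : ℕ => (k : ℝ) ^ 1 * (3 / 4 : ℝ) ^ k) atTop (𝓝 0) := by
      have := (summable_norm_pow_mul_geometric_of_norm_lt_one (R := ℝ) 1
        (r := (3/4 : ℝ)) (by rw [Real.norm_eq_abs, abs_of_pos (by norm_num : (0:ℝ) < 3/4)]; norm_num)).tendsto_atTop_zero
      exact squeeze_zero_norm (fun k => le_rfl) this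
    have h3 := ((h2.const_mul (‖c2‖ * C)).add (h1.const_mul (‖c1‖ * C)))
    have h4 : Tendsto (fun k : ℕ => ‖c2‖ * C * ((k:ℝ) ^ 2 * (3 / 4) ^ k) +
        ‖c1‖ * C * ((k:ℝ) ^ 1 * (3 / 4) ^ k)) atTop (𝓝 0) := by simpa using h3
    exact h4.congr (fun k => by ring)


lemma key (a : ℂ) {x : ℂ} (hx : ∀ m : ℕ, x ≠ -(m : ℂ)) :
    (x * (x + 1)) * ∑' k, bterm a x k
      = ((a + x) * ((1 - a) + x)) * ∑' k, bterm a (x + 2) k := by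
  have hx2 : ∀ m : ℕ, x + 2 ≠ -(m : ℂ) := by
    intro m
    have := hx_shift hx 2 m
    simpa using this
  set u : ℕ → ℂ := fun k => (2 * (k : ℂ) ^ 2 + (2 * (x + 1)) * (k : ℂ)) * bterm a (x + 2) k
    with hu
  have hstep : ∀ k : ℕ,
      (x * (x + 1)) * bterm a x k - ((a + x) * ((1 - a) + x)) * bterm a (x + 2) k
        = u k - u (k + 1) := by
    intro k
    have h1 : poch x k ≠ 0 := poch_ne_zero hx k
    have hx0 : x ≠ 0 := by have := add_nat_ne_zero hx 0; simpa using this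
    have hx1 : x + 1 ≠ 0 := by have := add_nat_ne_zero hx 1; simpa using this
    have hxk : x + k ≠ 0 := add_nat_ne_zero hx k
    have hxk1 : x + k + 1 ≠ 0 := by
      have := add_nat_ne_zero hx (k + 1)
      push_cast at this
      intro h; apply this; linear_combination h
    have hxk2 : x + 2 + k ≠ 0 := add_nat_ne_zero hx2 k
    have hk1 : ((k : ℂ) + 1) ≠ 0 := Nat.cast_add_one_ne_zero k
    have hQ : poch (x + 2) k ≠ 0 := poch_ne_zero hx2 k
    set G := gterm a k with hG
    set P := poch x k with hP
    set D := poch x k * ((x + (k : ℂ)) * (x + (k : ℂ) + 1)) with hD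
    have hDne : D ≠ 0 := mul_ne_zero h1 (mul_ne_zero hxk hxk1)
    have hdne : (2 : ℂ) * ((x + 2 + (k : ℂ)) * ((k : ℂ) + 1)) ≠ 0 :=
      mul_ne_zero two_ne_zero (mul_ne_zero hxk2 hk1)
    have e2 : bterm a (x + 2) k = G * (x * (x + 1)) / D := by
      rw [bterm_eq a (x + 2) k, div_eq_div_iff hQ hDne]
      linear_combination (-G) * poch_shift2 x k
    have e1 : bterm a x k = G * ((x + (k : ℂ)) * (x + (k : ℂ) + 1)) / D := by
      rw [bterm_eq a x k, div_eq_div_iff h1 hDne]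
      ring
    have e3 : (2 * ((k : ℂ) + 1) ^ 2 + 2 * (x + 1) * ((k : ℂ) + 1)) * bterm a (x + 2) (k + 1)
        = G * (x * (x + 1) * ((a + (k : ℂ)) * ((1 - a) + (k : ℂ)))) / D := by
      rw [bterm_succ a hx2 k, e2, div_mul_eq_mul_div, div_div, mul_div_assoc',
        div_eq_div_iff (mul_ne_zero hDne hdne) hDne]
      ring
    simp only [hu]
    push_cast
    rw [e3, e2, e1]
    rw [mul_div_assoc', mul_div_assoc', mul_div_assoc', div_sub_div_same, div_sub_div_same,
      div_eq_div_iff hDne hDne]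
    ring
  have hs1 := summable_bterm a hx
  have hs2 := summable_bterm a hx2
  have hd : Summable (fun k =>
      (x * (x + 1)) * bterm a x k - ((a + x) * ((1 - a) + x)) * bterm a (x + 2) k) :=
    (hs1.mul_left _).sub (hs2.mul_left _)
  have hpartial : ∀ n : ℕ, ∑ k ∈ range n,
      ((x * (x + 1)) * bterm a x k - ((a + x) * ((1 - a) + x)) * bterm a (x + 2) k)
        = u 0 - u n := by
    intro n
    rw [Finset.sum_congr rfl (fun k _ => hstep k)]
    exact Finset.sum_range_sub' u n
  have hu0 : u 0 = 0 := by simp [hu]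
  have hulim : Tendsto u atTop (𝓝 0) := tendsto_poly_bterm a (2 * (x + 1)) 2 hx2
  have hsum0 : HasSum (fun k =>
      (x * (x + 1)) * bterm a x k - ((a + x) * ((1 - a) + x)) * bterm a (x + 2) k) 0 := by
    rw [Summable.hasSum_iff_tendsto_nat hd]
    have h5 : Tendsto (fun n => u 0 - u n) atTop (𝓝 0) := by
      have := tendsto_const_nhds (x := u 0) (f := atTop (α := ℕ)) |>.sub hulim
      simpa [hu0] using this
    exact Tendsto.congr (fun n => (hpartial n).symm) h5
  have hsum1 : HasSum (fun k =>
      (x * (x + 1)) * bterm a x k - ((a + x) * ((1 - a) + x)) * bterm a (x + 2) k)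
      ((x * (x + 1)) * ∑' k, bterm a x k
        - ((a + x) * ((1 - a) + x)) * ∑' k, bterm a (x + 2) k) :=
    (hs1.hasSum.mul_left _).sub (hs2.hasSum.mul_left _)
  have h6 := hsum0.unique hsum1
  linear_combination -h6


noncomputable def S (a b : ℂ) (n : ℕ) : ℂ := ∑' k, bterm a (b + 2 * (n : ℂ)) k

noncomputable def rr (a b : ℂ) (j : ℕ) : ℂ :=
  ((a + (b + 2 * (j : ℂ))) * ((1 - a) + (b + 2 * (j : ℂ)))) /
    ((b + 2 * (j : ℂ)) * ((b + 2 * (j : ℂ)) + 1))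

noncomputable def Q (a b : ℂ) (n : ℕ) : ℂ := ∏ j ∈ range n, rr a b j

lemma hxn {b : ℂ} (hb : ∀ m : ℕ, b ≠ -(m : ℂ)) (n : ℕ) :
    ∀ m : ℕ, b + 2 * (n : ℂ) ≠ -(m : ℂ) := by
  intro m h
  apply hb (m + 2 * n)
  push_cast
  linear_combination h

lemma S_step (a : ℂ) {b : ℂ} (hb : ∀ m : ℕ, b ≠ -(m : ℂ)) (n : ℕ) :
    S a b n = rr a b n * S a b (n + 1) := by
  have hx := hxn hb n
  have hk := key a hx
  have h0 : b + 2 * (n : ℂ) ≠ 0 := fun h => hx 0 (by simpa using h)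
  have h1' : b + 2 * (n : ℂ) + 1 ≠ 0 := by
    have := add_nat_ne_zero hx 1
    simpa using this
  have hS1 : (∑' k, bterm a ((b + 2 * (n : ℂ)) + 2) k) = S a b (n + 1) := by
    apply tsum_congr
    intro k
    congr 1
    push_cast
    ring
  rw [hS1] at hk
  show (∑' k, bterm a (b + 2 * (n : ℂ)) k) = rr a b n * S a b (n + 1)
  rw [rr, div_mul_eq_mul_div, eq_div_iff (mul_ne_zero h0 h1')]
  linear_combination hk
lemma S_prod (a : ℂ) {b : ℂ} (hb : ∀ m : ℕ, b ≠ -(m : ℂ)) (n : ℕ) :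
    S a b 0 = Q a b n * S a b n := by
  induction n with
  | zero => simp [Q]
  | succ m ih =>
    have hQ : Q a b (m + 1) = Q a b m * rr a b m := Finset.prod_range_succ _ _
    rw [ih, S_step a hb m, hQ]
    ring

lemma poch_compare {b : ℂ} {n : ℕ} (hn : ‖b‖ + 1 ≤ (n : ℝ)) (k : ℕ) :
    (n : ℝ) * ‖poch (b + 2) (k + 1)‖ ≤ (‖b‖ + 2) * ‖poch (b + 2 * (n : ℂ)) (k + 1)‖ := by
  have hcore : ∀ j : ℕ, 2 * (n : ℝ) + (j : ℝ) - ‖b‖ ≤ ‖b + 2 * (n : ℂ) + (j : ℂ)‖ := by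
    intro j
    have hcast : ‖(2 * (n : ℂ) + (j : ℂ))‖ = 2 * (n : ℝ) + (j : ℝ) := by
      have h : (2 * (n : ℂ) + (j : ℂ)) = ((2 * n + j : ℕ) : ℂ) := by push_cast; ring
      rw [h, Complex.norm_natCast]
      push_cast; ring
    have h2 : ‖2 * (n : ℂ) + (j : ℂ)‖ ≤ ‖b + 2 * (n : ℂ) + (j : ℂ)‖ + ‖b‖ := by
      calc ‖2 * (n : ℂ) + (j : ℂ)‖ = ‖(b + 2 * (n : ℂ) + (j : ℂ)) - b‖ := by ring_nf
      _ ≤ ‖b + 2 * (n : ℂ) + (j : ℂ)‖ + ‖b‖ := norm_sub_le _ _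
    rw [hcast] at h2
    linarith
  have hlow : ∀ j : ℕ, ‖b‖ + 2 + (j : ℝ) ≤ ‖b + 2 * (n : ℂ) + (j : ℂ)‖ := by
    intro j
    have := hcore j
    linarith
  have hlow2 : ∀ j : ℕ, (n : ℝ) ≤ ‖b + 2 * (n : ℂ) + (j : ℂ)‖ := by
    intro j
    have := hcore j
    have hj : (0 : ℝ) ≤ (j : ℝ) := Nat.cast_nonneg j
    linarith
  have hup : ∀ j : ℕ, ‖b + 2 + (j : ℂ)‖ ≤ ‖b‖ + 2 + (j : ℝ) := by
    intro j
    have hcast : ‖((2 : ℂ) + (j : ℂ))‖ = 2 + (j : ℝ) := by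
      have h : ((2 : ℂ) + (j : ℂ)) = ((2 + j : ℕ) : ℂ) := by push_cast; ring
      rw [h, Complex.norm_natCast]
      push_cast; ring
    calc ‖b + 2 + (j : ℂ)‖ = ‖b + ((2 : ℂ) + (j : ℂ))‖ := by ring_nf
    _ ≤ ‖b‖ + ‖(2 : ℂ) + (j : ℂ)‖ := norm_add_le _ _
    _ = ‖b‖ + (2 + (j : ℝ)) := by rw [hcast]
    _ = ‖b‖ + 2 + (j : ℝ) := by ring
  induction k with
  | zero =>
    have e1 : poch (b + 2) 1 = b + 2 := by
      rw [poch_succ, poch_zero]; simp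
    have e2 : poch (b + 2 * (n : ℂ)) 1 = b + 2 * (n : ℂ) := by
      rw [poch_succ, poch_zero]; simp
    rw [e1, e2]
    have h1 := hup 0
    have h2 := hlow2 0
    simp only [Nat.cast_zero, add_zero] at h1 h2
    have hb0 : (0 : ℝ) ≤ ‖b‖ := norm_nonneg b
    have hn0 : (0 : ℝ) ≤ (n : ℝ) := Nat.cast_nonneg n
    nlinarith [mul_le_mul_of_nonneg_left h1 hn0,
      mul_le_mul_of_nonneg_left h2 (by positivity : (0:ℝ) ≤ ‖b‖ + 2)]
  | succ j ih =>
    rw [poch_succ (b + 2) (j + 1), poch_succ (b + 2 * (n : ℂ)) (j + 1), norm_mul, norm_mul]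
    have hf : ‖b + 2 + ((j + 1 : ℕ) : ℂ)‖ ≤ ‖b + 2 * (n : ℂ) + ((j + 1 : ℕ) : ℂ)‖ := by
      have h1 := hup (j + 1)
      have h2 := hlow (j + 1)
      linarith
    have hb0 : (0 : ℝ) ≤ ‖b‖ := norm_nonneg b
    calc (n : ℝ) * (‖poch (b + 2) (j + 1)‖ * ‖b + 2 + ((j + 1 : ℕ) : ℂ)‖)
        = ((n : ℝ) * ‖poch (b + 2) (j + 1)‖) * ‖b + 2 + ((j + 1 : ℕ) : ℂ)‖ := by ring
    _ ≤ ((‖b‖ + 2) * ‖poch (b + 2 * (n : ℂ)) (j + 1)‖) * ‖b + 2 + ((j + 1 : ℕ) : ℂ)‖ :=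
        mul_le_mul_of_nonneg_right ih (norm_nonneg _)
    _ ≤ ((‖b‖ + 2) * ‖poch (b + 2 * (n : ℂ)) (j + 1)‖) * ‖b + 2 * (n : ℂ) + ((j + 1 : ℕ) : ℂ)‖ :=
        mul_le_mul_of_nonneg_left hf (by positivity)
    _ = (‖b‖ + 2) * (‖poch (b + 2 * (n : ℂ)) (j + 1)‖ * ‖b + 2 * (n : ℂ) + ((j + 1 : ℕ) : ℂ)‖) := by
        ring

lemma hb2 {b : ℂ} (hb : ∀ m : ℕ, b ≠ -(m : ℂ)) : ∀ m : ℕ, b + 2 ≠ -(m : ℂ) := by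
  intro m h
  apply hb (m + 2)
  push_cast
  linear_combination h

lemma bterm_compare (a : ℂ) {b : ℂ} (hb : ∀ m : ℕ, b ≠ -(m : ℂ)) {n : ℕ}
    (hn : ‖b‖ + 1 ≤ (n : ℝ)) (k : ℕ) :
    ‖bterm a (b + 2 * (n : ℂ)) (k + 1)‖
      ≤ (‖b‖ + 2) / (n : ℝ) * ‖bterm a (b + 2) (k + 1)‖ := by
  have hx := hxn hb n
  have hPN : (0 : ℝ) < ‖poch (b + 2 * (n : ℂ)) (k + 1)‖ :=
    norm_pos_iff.2 (poch_ne_zero hx (k + 1))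
  have hP2 : (0 : ℝ) < ‖poch (b + 2) (k + 1)‖ :=
    norm_pos_iff.2 (poch_ne_zero (hb2 hb) (k + 1))
  have hn0 : (0 : ℝ) < (n : ℝ) := by
    have := norm_nonneg b; linarith
  have hclaim := poch_compare hn k
  rw [bterm_eq a (b + 2 * (n : ℂ)) (k + 1), bterm_eq a (b + 2) (k + 1), norm_div, norm_div]
  have hre : (‖b‖ + 2) / (n : ℝ) * (‖gterm a (k + 1)‖ / ‖poch (b + 2) (k + 1)‖)
      = (‖b‖ + 2) * ‖gterm a (k + 1)‖ / ((n : ℝ) * ‖poch (b + 2) (k + 1)‖) := by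
    ring
  rw [hre, div_le_div_iff₀ hPN (by positivity)]
  have hg : (0 : ℝ) ≤ ‖gterm a (k + 1)‖ := norm_nonneg _
  nlinarith [mul_le_mul_of_nonneg_left hclaim hg]

lemma S_tendsto (a : ℂ) {b : ℂ} (hb : ∀ m : ℕ, b ≠ -(m : ℂ)) :
    Tendsto (S a b) atTop (𝓝 1) := by
  rw [tendsto_iff_norm_sub_tendsto_zero]
  set M : ℝ := ∑' k, ‖bterm a (b + 2) (k + 1)‖ with hM
  apply squeeze_zero' (g := fun n : ℕ => (‖b‖ + 2) * M / (n : ℝ))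
  · filter_upwards with n using norm_nonneg _
  · filter_upwards [eventually_ge_atTop (⌈‖b‖ + 1⌉₊)] with n hn
    have hnR : ‖b‖ + 1 ≤ (n : ℝ) := by
      calc ‖b‖ + 1 ≤ (⌈‖b‖ + 1⌉₊ : ℝ) := Nat.le_ceil _
      _ ≤ (n : ℝ) := Nat.cast_le.2 hn
    have hn0 : (0 : ℝ) < (n : ℝ) := by have := norm_nonneg b; linarith
    have hx := hxn hb n
    have hsum := summable_bterm a hx
    have hnorm := summable_norm_bterm a hx
    have hnorm1 : Summable (fun k => ‖bterm a (b + 2 * (n : ℂ)) (k + 1)‖) :=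
      (summable_nat_add_iff 1).2 hnorm
    have hnormg : Summable (fun k => ‖bterm a (b + 2) (k + 1)‖) :=
      (summable_nat_add_iff 1).2 (summable_norm_bterm a (hb2 hb))
    have hdecomp : S a b n - 1 = ∑' k, bterm a (b + 2 * (n : ℂ)) (k + 1) := by
      rw [S, Summable.tsum_eq_zero_add hsum, bterm_zero]
      ring
    rw [hdecomp]
    calc ‖∑' k, bterm a (b + 2 * (n : ℂ)) (k + 1)‖
        ≤ ∑' k, ‖bterm a (b + 2 * (n : ℂ)) (k + 1)‖ := norm_tsum_le_tsum_norm hnorm1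
    _ ≤ ∑' k, (‖b‖ + 2) / (n : ℝ) * ‖bterm a (b + 2) (k + 1)‖ :=
        Summable.tsum_le_tsum (fun k => bterm_compare a hb hnR k) hnorm1 (hnormg.mul_left _)
    _ = (‖b‖ + 2) / (n : ℝ) * M := tsum_mul_left
    _ = (‖b‖ + 2) * M / (n : ℝ) := by ring
  · have := tendsto_const_div_atTop_nhds_zero_nat ((‖b‖ + 2) * M)
    exact this


lemma rr_eq (a : ℂ) {b : ℂ} (hb : ∀ m : ℕ, b ≠ -(m : ℂ))
    (h1 : ∀ m : ℕ, b / 2 ≠ -(m : ℂ)) (h2 : ∀ m : ℕ, (1 + b) / 2 ≠ -(m : ℂ)) (j : ℕ) :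
    rr a b j = (((a + b) / 2 + (j : ℂ)) * ((1 - a + b) / 2 + (j : ℂ))) /
      ((b / 2 + (j : ℂ)) * ((1 + b) / 2 + (j : ℂ))) := by
  have d1 : b + 2 * (j : ℂ) ≠ 0 := fun h => hxn hb j 0 (by simpa using h)
  have d2 : b + 2 * (j : ℂ) + 1 ≠ 0 := by
    intro h
    apply hb (2 * j + 1)
    push_cast
    linear_combination h
  have d3 : b / 2 + (j : ℂ) ≠ 0 := add_nat_ne_zero h1 j
  have d4 : (1 + b) / 2 + (j : ℂ) ≠ 0 := add_nat_ne_zero h2 j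
  rw [rr, div_eq_div_iff (mul_ne_zero d1 d2) (mul_ne_zero d3 d4)]
  ring

lemma Q_gammaSeq (a : ℂ) {b : ℂ} (hb : ∀ m : ℕ, b ≠ -(m : ℂ))
    (h1 : ∀ m : ℕ, b / 2 ≠ -(m : ℂ)) (h2 : ∀ m : ℕ, (1 + b) / 2 ≠ -(m : ℂ))
    {n : ℕ} (hn : 1 ≤ n) :
    Complex.GammaSeq (b / 2) n * Complex.GammaSeq ((1 + b) / 2) n /
      (Complex.GammaSeq ((a + b) / 2) n * Complex.GammaSeq ((1 - a + b) / 2) n)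
        = Q a b (n + 1) := by
  have hn0 : (n : ℂ) ≠ 0 := Nat.cast_ne_zero.2 (by omega)
  set Pb := ∏ j ∈ range (n + 1), (b / 2 + (j : ℂ)) with hPb
  set Pb1 := ∏ j ∈ range (n + 1), ((1 + b) / 2 + (j : ℂ)) with hPb1
  set Pab := ∏ j ∈ range (n + 1), ((a + b) / 2 + (j : ℂ)) with hPab
  set P1ab := ∏ j ∈ range (n + 1), ((1 - a + b) / 2 + (j : ℂ)) with hP1ab
  have hQ : Q a b (n + 1) = (Pab * P1ab) / (Pb * Pb1) := by
    rw [Q, Finset.prod_congr rfl (fun j _ => rr_eq a hb h1 h2 j), Finset.prod_div_distrib,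
      Finset.prod_mul_distrib, Finset.prod_mul_distrib]
  rw [hQ]
  simp only [Complex.GammaSeq]
  rw [div_mul_div_comm, div_mul_div_comm]
  rw [div_div_div_comm]
  have hN : (n : ℂ) ^ (b / 2) * (Nat.factorial n : ℂ) * ((n : ℂ) ^ ((1 + b) / 2) * (Nat.factorial n : ℂ))
      = (n : ℂ) ^ ((a + b) / 2) * (Nat.factorial n : ℂ) * ((n : ℂ) ^ ((1 - a + b) / 2) * (Nat.factorial n : ℂ)) := by
    rw [mul_mul_mul_comm, mul_mul_mul_comm ((n : ℂ) ^ ((a + b) / 2))]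
    congr 1
    rw [← Complex.cpow_add _ _ hn0, ← Complex.cpow_add _ _ hn0]
    congr 1
    ring
  have hcne : ∀ s : ℂ, (n : ℂ) ^ s ≠ 0 := by
    intro s h
    exact hn0 ((Complex.cpow_eq_zero_iff _ _).1 h).1
  have hNne : (n : ℂ) ^ ((a + b) / 2) * (Nat.factorial n : ℂ) *
      ((n : ℂ) ^ ((1 - a + b) / 2) * (Nat.factorial n : ℂ)) ≠ 0 :=
    mul_ne_zero (mul_ne_zero (hcne _) (factorial_ne_zero' n))
      (mul_ne_zero (hcne _) (factorial_ne_zero' n))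
  rw [hN, div_self hNne, one_div_div]

lemma Q_tendsto (a : ℂ) {b : ℂ} (hb : ∀ m : ℕ, b ≠ -(m : ℂ))
    (h1 : ∀ m : ℕ, b / 2 ≠ -(m : ℂ)) (h2 : ∀ m : ℕ, (1 + b) / 2 ≠ -(m : ℂ))
    (h3 : ∀ m : ℕ, (a + b) / 2 ≠ -(m : ℂ)) (h4 : ∀ m : ℕ, (1 - a + b) / 2 ≠ -(m : ℂ)) :
    Tendsto (Q a b) atTop (𝓝 (Gamma (b / 2) * Gamma ((1 + b) / 2) /
      (Gamma ((a + b) / 2) * Gamma ((1 - a + b) / 2)))) := by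
  have hG : Tendsto (fun n => Complex.GammaSeq (b / 2) n * Complex.GammaSeq ((1 + b) / 2) n /
      (Complex.GammaSeq ((a + b) / 2) n * Complex.GammaSeq ((1 - a + b) / 2) n)) atTop
      (𝓝 (Gamma (b / 2) * Gamma ((1 + b) / 2) /
        (Gamma ((a + b) / 2) * Gamma ((1 - a + b) / 2)))) :=
    ((Complex.GammaSeq_tendsto_Gamma _).mul (Complex.GammaSeq_tendsto_Gamma _)).div
      ((Complex.GammaSeq_tendsto_Gamma _).mul (Complex.GammaSeq_tendsto_Gamma _))
      (mul_ne_zero (Complex.Gamma_ne_zero h3) (Complex.Gamma_ne_zero h4))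
  have h5 : Tendsto (fun n => Q a b (n + 1)) atTop (𝓝 (Gamma (b / 2) * Gamma ((1 + b) / 2) /
      (Gamma ((a + b) / 2) * Gamma ((1 - a + b) / 2)))) := by
    apply hG.congr'
    filter_upwards [eventually_ge_atTop 1] with n hn
    exact Q_gammaSeq a hb h1 h2 hn
  exact (tendsto_add_atTop_iff_nat 1).1 h5

end BaileyAux

open BaileyAux in
/-- Bailey's theorem:
`₂F₁(a, 1-a; b; 1/2) = Γ(b/2) Γ((1+b)/2) / (Γ((a+b)/2) Γ((1-a+b)/2))`. -/
theorem bailey_theorem (a b : ℂ)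
    (hb : ∀ m : ℕ, b ≠ -(m : ℂ))
    (h1 : ∀ m : ℕ, b / 2 ≠ -(m : ℂ))
    (h2 : ∀ m : ℕ, (1 + b) / 2 ≠ -(m : ℂ))
    (h3 : ∀ m : ℕ, (a + b) / 2 ≠ -(m : ℂ))
    (h4 : ∀ m : ℕ, (1 - a + b) / 2 ≠ -(m : ℂ)) :
    HasSum (fun k : ℕ =>
        poch a k * poch (1 - a) k * (1 / 2 : ℂ) ^ k /
          (poch b k * (Nat.factorial k : ℂ)))
      (Gamma (b / 2) * Gamma ((1 + b) / 2) /
        (Gamma ((a + b) / 2) * Gamma ((1 - a + b) / 2))) := by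
  have hS00 : S a b 0 = ∑' k, bterm a b k := by
    unfold S
    simp
  have hlim1 : Tendsto (fun n => Q a b n * S a b n) atTop
      (𝓝 ((Gamma (b / 2) * Gamma ((1 + b) / 2) /
        (Gamma ((a + b) / 2) * Gamma ((1 - a + b) / 2))) * 1)) :=
    (Q_tendsto a hb h1 h2 h3 h4).mul (S_tendsto a hb)
  rw [mul_one] at hlim1
  have hconst : (fun n => Q a b n * S a b n) = fun _ => S a b 0 :=
    funext fun n => (S_prod a hb n).symm
  rw [hconst] at hlim1
  have hval : S a b 0 = Gamma (b / 2) * Gamma ((1 + b) / 2) /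
      (Gamma ((a + b) / 2) * Gamma ((1 - a + b) / 2)) :=
    tendsto_nhds_unique tendsto_const_nhds hlim1
  have hfin : HasSum (fun k => bterm a b k) (S a b 0) := by
    rw [hS00]
    exact (summable_bterm a hb).hasSum
  rw [hval] at hfin
  exact hfin
end
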